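/- Let L₊ be the Laplacian of a positively weighted graph whose positive subgraph is disconnected, and suppose there is a negative edge e = (v_i, v_j) with weight −w (w > 0) joining two different connected components. Then the signed Laplacian L = L₊ − w (e_i − e_j)(e_i − e_j)^T is not positive semidefinite; in fact, there is a vector v (constant 1 on the first component, 1/2 on the second, 0 elsewhere) with v^T L v ≤ −w/4 < 0. -/

import Mathlib

open Matrix

lemma vecMulVec_mulVec' {n : ℕ} (a b v : Fin n → ℝ) :
    (vecMulVec a b) *ᵥ v = (b ⬝ᵥ v) • a := by
  ext k
  simp [vecMulVec_apply, mulVec, dotProduct, Finset.sum_mul, mul_assoc, mul_comm, mul_left_comm, ← Finset.mul_sum]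

/-- If a negative edge `(i,j)` of weight `-w` joins two different connected components
`S` and `T` of the positive subgraph (indicators of `S` and `T` are in the kernel of
`L₊`), then the signed Laplacian `L₊ − w(e_i−e_j)(e_i−e_j)ᵀ` is not PSD: the vector `v`
which is `1` on `S`, `1/2` on `T` and `0` elsewhere gives `vᵀLv ≤ −w/4 < 0`. -/
theorem stmt_6 {n : ℕ} (Lplus : Matrix (Fin n) (Fin n) ℝ) (hLplus : Lplus.PosSemidef)
    (S T : Finset (Fin n)) (hST : Disjoint S T) (i j : Fin n) (hi : i ∈ S) (hj : j ∈ T)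
    (hS : Lplus *ᵥ (fun v => if v ∈ S then (1 : ℝ) else 0) = 0)
    (hT : Lplus *ᵥ (fun v => if v ∈ T then (1 : ℝ) else 0) = 0)
    (w : ℝ) (hw : 0 < w)
    (L : Matrix (Fin n) (Fin n) ℝ)
    (hL : L = Lplus - w • vecMulVec (Pi.single i (1 : ℝ) - Pi.single j 1)
      (Pi.single i (1 : ℝ) - Pi.single j 1))
    (v : Fin n → ℝ)
    (hv : v = fun a => if a ∈ S then (1 : ℝ) else if a ∈ T then 1 / 2 else 0) :
    ¬ L.PosSemidef ∧ v ⬝ᵥ (L *ᵥ v) ≤ -w / 4 ∧ -w / 4 < 0 := by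
  set u : Fin n → ℝ := Pi.single i 1 - Pi.single j 1 with hu
  have hij : i ≠ j := fun h => (Finset.disjoint_left.mp hST hi) (h ▸ hj)
  have hvdecomp : v = (fun a => if a ∈ S then (1 : ℝ) else 0)
      + (1/2 : ℝ) • (fun a => if a ∈ T then (1 : ℝ) else 0) := by
    funext a
    by_cases haS : a ∈ S
    · have haT : a ∉ T := Finset.disjoint_left.mp hST haS
      simp [hv, haS, haT]
    · by_cases haT : a ∈ T <;> simp [hv, haS, haT]
  have hLv : Lplus *ᵥ v = 0 := by
    rw [hvdecomp, mulVec_add, hS, mulVec_smul, hT]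
    simp
  have hvi : v i = 1 := by simp [hv, hi]
  have hvj : v j = 1/2 := by
    have : j ∉ S := Finset.disjoint_right.mp hST hj
    simp [hv, this, hj]
  have huv : u ⬝ᵥ v = 1/2 := by
    rw [hu, sub_dotProduct, single_dotProduct, single_dotProduct, hvi, hvj]
    ring
  have hvu : v ⬝ᵥ u = 1/2 := by rw [dotProduct_comm]; exact huv
  have key : v ⬝ᵥ (L *ᵥ v) = -w / 4 := by
    rw [hL, sub_mulVec, dotProduct_sub, hLv, smul_mulVec,
      vecMulVec_mulVec', huv, dotProduct_zero, dotProduct_smul, dotProduct_smul, hvu]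
    simp [smul_eq_mul]; ring
  refine ⟨fun hpsd => ?_, key.le, by linarith⟩
  have h0 := hpsd.dotProduct_mulVec_nonneg v
  rw [show star v = v from rfl] at h0
  rw [key] at h0
  linarith
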